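/- Let E be an m×N nonnegative integer matrix with no zero column, P = {γ ∈ ℝ_{≥0}^N : E·γ ⪯ 1_m} its splitting polytope, and suppose P has a unique coordinate-sum-maximizing point ρ. If γ ∈ ℝ_{≥0}^N satisfies |γ| = |⟨ρ⟩_e| and E·γ = E·⟨ρ⟩_e, then γ = ⟨ρ⟩_e, where ⟨ρ⟩_e denotes the componentwise e-th truncation of the p-expansion of ρ (for a fixed prime p and e ≥ 1). -/

import Mathlib

/-- Let `E` be an `m × N` nonnegative integer matrix with no zero column whose
splitting polytope `P = {γ ∈ ℝ_{≥0}^N : E·γ ⪯ 1}` has a unique coordinate-sum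
maximizing point `ρ`, with base-`p` digit data `d` and `e`-th truncation `ρe`
(`ρe j = ∑_{k<e} d j k / p^{k+1}`).  If `γ ⪰ 0` satisfies `|γ| = |⟨ρ⟩_e|` and
`E·γ = E·⟨ρ⟩_e`, then `γ = ⟨ρ⟩_e`. -/
theorem stmt13 (p : ℕ) (hp : p.Prime) (m N : ℕ) (E : Matrix (Fin m) (Fin N) ℕ)
    (hE : ∀ j, ∃ i, E i j ≠ 0)
    (ρ : Fin N → ℝ)
    (hρP : (∀ j, 0 ≤ ρ j) ∧ ∀ i, ∑ j, (E i j : ℝ) * ρ j ≤ 1)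
    (hmax : ∀ γ : Fin N → ℝ, ((∀ j, 0 ≤ γ j) ∧ ∀ i, ∑ j, (E i j : ℝ) * γ j ≤ 1) →
      ∑ j, γ j ≤ ∑ j, ρ j)
    (huniq : ∀ γ : Fin N → ℝ, ((∀ j, 0 ≤ γ j) ∧ ∀ i, ∑ j, (E i j : ℝ) * γ j ≤ 1) →
      ∑ j, γ j = ∑ j, ρ j → γ = ρ)
    (d : Fin N → ℕ → ℕ)
    (hd : ∀ j, (∀ k, d j k ≤ p - 1) ∧
      HasSum (fun k => (d j k : ℝ) / (p : ℝ) ^ (k + 1)) (ρ j) ∧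
      (ρ j = 0 ∨ ∀ M, ∃ k ≥ M, d j k ≠ 0))
    (e : ℕ) (he : 1 ≤ e)
    (ρe : Fin N → ℝ)
    (hρe : ∀ j, ρe j = ∑ k ∈ Finset.range e, (d j k : ℝ) / (p : ℝ) ^ (k + 1))
    (γ : Fin N → ℝ) (hγ0 : ∀ j, 0 ≤ γ j)
    (hsum : ∑ j, γ j = ∑ j, ρe j)
    (hEeq : ∀ i, ∑ j, (E i j : ℝ) * γ j = ∑ j, (E i j : ℝ) * ρe j) :
    γ = ρe := by
  have hle : ∀ j, ρe j ≤ ρ j := by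
    intro j
    rw [hρe j]
    exact sum_le_hasSum (Finset.range e) (fun k _ => by positivity) (hd j).2.1
  have key : (fun j => γ j + (ρ j - ρe j)) = ρ := by
    apply huniq
    · constructor
      · intro j
        have := hle j
        have := hγ0 j
        linarith
      · intro i
        have h1 : ∑ j, (E i j : ℝ) * (γ j + (ρ j - ρe j))
            = ∑ j, (E i j : ℝ) * γ j + (∑ j, (E i j : ℝ) * ρ j - ∑ j, (E i j : ℝ) * ρe j) := by
          rw [← Finset.sum_sub_distrib, ← Finset.sum_add_distrib]
          exact Finset.sum_congr rfl (fun j _ => by ring)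
        rw [h1, hEeq i]
        have := hρP.2 i
        linarith
    · have h1 : ∑ j, (γ j + (ρ j - ρe j)) = ∑ j, γ j + (∑ j, ρ j - ∑ j, ρe j) := by
        rw [← Finset.sum_sub_distrib, ← Finset.sum_add_distrib]
      rw [h1, hsum]; ring
  funext j
  have := congrFun key j
  linarith
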